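/- Let π(x) = e^{−|x|}/2 be the Laplace density and Δ(u) := (1−|u|)·1_{[−1,1]}(u), with proposal density q(x,y) := Δ(x−y). Then the rejection probability satisfies sup_{x∈ℝ} r(x) ≤ 1 − 1/e. -/

import Mathlib

open MeasureTheory Filter Topology
open intervalIntegral

noncomputable section

theorem laplace_rejection_bound
    (π : ℝ → ℝ) (hπ : π = fun x => Real.exp (-|x|) / 2)
    (Δ : ℝ → ℝ) (hΔ : Δ = fun u => if |u| ≤ 1 then 1 - |u| else 0)
    (r : ℝ → ℝ)
    (hr : ∀ x, r x = 1 - ∫ u in (-1 : ℝ)..1, Δ u * min 1 (π (x + u) / π x)) :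
    sSup (Set.range r) ≤ 1 - 1 / Real.exp 1 := by
  have key : ∀ x, r x ≤ 1 - 1 / Real.exp 1 := by
    intro x
    rw [hr]
    have hcongr : (∫ u in (-1 : ℝ)..1, Δ u * min 1 (π (x + u) / π x)) =
        ∫ u in (-1 : ℝ)..1, (1 - |u|) * min 1 (π (x + u) / π x) := by
      apply intervalIntegral.integral_congr
      intro u hu
      have : |u| ≤ 1 := by
        rw [Set.uIcc_of_le (by norm_num : (-1:ℝ) ≤ 1)] at hu
        rw [abs_le]; exact ⟨hu.1, hu.2⟩
      simp [hΔ, this]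
    rw [hcongr]
    have hc1 : Continuous fun u : ℝ => 1 - |u| := continuous_const.sub continuous_abs
    have hc2 : Continuous fun u : ℝ => Real.exp (-|x + u|) / 2 :=
      (Real.continuous_exp.comp ((continuous_const.add continuous_id).abs.neg)).div_const 2
    have hg : Continuous fun u : ℝ => (1 - |u|) * min 1 (π (x + u) / π x) := by
      rw [hπ]
      exact hc1.mul (continuous_const.min (hc2.div_const _))
    have hf : Continuous fun u : ℝ => (1 - |u|) * (1 / Real.exp 1) := hc1.mul continuous_const
    have hmono : (∫ u in (-1 : ℝ)..1, (1 - |u|) * (1 / Real.exp 1)) ≤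
        ∫ u in (-1 : ℝ)..1, (1 - |u|) * min 1 (π (x + u) / π x) := by
      apply intervalIntegral.integral_mono_on (by norm_num)
        (hf.intervalIntegrable _ _) (hg.intervalIntegrable _ _)
      intro u hu
      have hu1 : |u| ≤ 1 := abs_le.2 ⟨hu.1, hu.2⟩
      have h1u : (0:ℝ) ≤ 1 - |u| := by linarith
      apply mul_le_mul_of_nonneg_left _ h1u
      have hratio : π (x + u) / π x = Real.exp (|x| - |x + u|) := by
        rw [hπ]
        simp only
        have h2 : Real.exp (-|x + u|) / 2 / (Real.exp (-|x|) / 2) =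
            Real.exp (-|x + u|) / Real.exp (-|x|) := by
          field_simp
        rw [h2, ← Real.exp_sub]
        congr 1
        ring
      rw [hratio]
      rw [le_min_iff]
      constructor
      · rw [one_div, ← Real.exp_neg]
        exact (Real.exp_le_exp.2 (by norm_num)).trans_eq Real.exp_zero
      · rw [one_div, ← Real.exp_neg]
        apply Real.exp_le_exp.2
        have h3 := abs_add_le x u
        linarith
    have hval : (∫ u in (-1 : ℝ)..1, (1 - |u|) * (1 / Real.exp 1)) = 1 / Real.exp 1 := by
      rw [intervalIntegral.integral_mul_const]
      have habs : (∫ u in (-1 : ℝ)..1, (1 - |u|)) = 1 := by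
        have h1 : (∫ u in (-1 : ℝ)..0, (1 - |u|)) = ∫ u in (-1 : ℝ)..0, (1 + u) := by
          apply intervalIntegral.integral_congr
          intro u hu
          rw [Set.uIcc_of_le (by norm_num : (-1:ℝ) ≤ 0)] at hu
          show 1 - |u| = 1 + u
          rw [abs_of_nonpos hu.2]; ring
        have h2 : (∫ u in (0 : ℝ)..1, (1 - |u|)) = ∫ u in (0 : ℝ)..1, (1 - u) := by
          apply intervalIntegral.integral_congr
          intro u hu
          rw [Set.uIcc_of_le (by norm_num : (0:ℝ) ≤ 1)] at hu
          show 1 - |u| = 1 - u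
          rw [abs_of_nonneg hu.1]
        rw [← intervalIntegral.integral_add_adjacent_intervals (a := (-1:ℝ)) (b := 0) (c := 1)
          (hc1.intervalIntegrable _ _)
          (hc1.intervalIntegrable _ _), h1, h2]
        have e1 : (∫ u in (-1 : ℝ)..0, (1 + u)) = 1/2 := by
          rw [integral_add intervalIntegrable_const intervalIntegrable_id]
          simp [integral_id]
          norm_num
        have e2 : (∫ u in (0 : ℝ)..1, (1 - u)) = 1/2 := by
          rw [integral_sub intervalIntegrable_const intervalIntegrable_id]
          simp [integral_id]
          norm_num
        rw [e1, e2]; norm_num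
      rw [habs, one_mul]
    linarith [hmono, hval.symm ▸ hmono]
  apply csSup_le (Set.range_nonempty r)
  rintro y ⟨x, rfl⟩
  exact key x
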